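/- Let n ∈ {1,2,3}, a₁ = -1, a₃ = 1, a₂ ∈ ℝ, and let J and K be as in the Nehari setting (J(v) = (1/4)‖∇v‖² + (1/12)‖v‖³_{L³} + (1/20)‖v‖⁵_{L⁵}, K(v) = ‖∇v‖² + ‖v‖³_{L³} - a₂‖v‖⁴_{L⁴} - ‖v‖⁵_{L⁵}). If v ∈ X\{0} satisfies K(v) < 0, then μ < J(v), where μ = inf{J(w) : w ∈ X\{0}, K(w) = 0}. In particular μ = inf{J(v) : v ∈ X\{0}, K(v) ≤ 0}. -/

import Mathlib

open MeasureTheory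

noncomputable def gradSq (n : ℕ) (v : EuclideanSpace ℝ (Fin n) → ℝ) : ℝ :=
  ∫ x, ‖fderiv ℝ v x‖^2

noncomputable def lpP (n : ℕ) (p : ℕ) (v : EuclideanSpace ℝ (Fin n) → ℝ) : ℝ :=
  ∫ x, |v x| ^ p

/-- Nehari functional `K`. -/
noncomputable def Kf (n : ℕ) (a₂ : ℝ) (v : EuclideanSpace ℝ (Fin n) → ℝ) : ℝ :=
  gradSq n v + lpP n 3 v - a₂ * lpP n 4 v - lpP n 5 v

noncomputable def Jf (n : ℕ) (v : EuclideanSpace ℝ (Fin n) → ℝ) : ℝ :=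
  (1/4) * gradSq n v + (1/12) * lpP n 3 v + (1/20) * lpP n 5 v

/-- Action functional `S`. -/
noncomputable def Sf (n : ℕ) (a₂ : ℝ) (v : EuclideanSpace ℝ (Fin n) → ℝ) : ℝ :=
  (1/2) * gradSq n v + (1/3) * lpP n 3 v - (a₂/4) * lpP n 4 v - (1/5) * lpP n 5 v

/-- Pohozhaev functional `P`. -/
noncomputable def Pf (n : ℕ) (a₂ : ℝ) (v : EuclideanSpace ℝ (Fin n) → ℝ) : ℝ :=
  gradSq n v + ((n : ℝ)/6) * lpP n 3 v - ((n : ℝ) * a₂/4) * lpP n 4 v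
    - (3 * (n : ℝ)/10) * lpP n 5 v

/-- Membership in `X = Ḣ¹ ∩ L³` together with the integrabilities needed to make
all the functionals well defined. -/
def Adm (n : ℕ) (v : EuclideanSpace ℝ (Fin n) → ℝ) : Prop :=
  Differentiable ℝ v ∧ MemLp (fun x => ‖fderiv ℝ v x‖) 2 volume ∧
    MemLp v 3 volume ∧ MemLp v 4 volume ∧ MemLp v 5 volume

/-- The rescaling `v^λ(x) = λ^{n/2} v (λ x)`. -/
noncomputable def scal (n : ℕ) (l : ℝ) (v : EuclideanSpace ℝ (Fin n) → ℝ) :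
    EuclideanSpace ℝ (Fin n) → ℝ :=
  fun x => l ^ ((n : ℝ)/2) * v (l • x)

lemma lpP_nonneg (n p : ℕ) (v : EuclideanSpace ℝ (Fin n) → ℝ) : 0 ≤ lpP n p v :=
  integral_nonneg fun x => pow_nonneg (abs_nonneg _) _

lemma gradSq_nonneg (n : ℕ) (v : EuclideanSpace ℝ (Fin n) → ℝ) : 0 ≤ gradSq n v :=
  integral_nonneg fun x => sq_nonneg _

lemma Jf_nonneg (n : ℕ) (v : EuclideanSpace ℝ (Fin n) → ℝ) : 0 ≤ Jf n v := by
  have := lpP_nonneg n 3 v; have := lpP_nonneg n 5 v; have := gradSq_nonneg n v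
  unfold Jf; linarith

lemma lpP_const_mul (n p : ℕ) (c : ℝ) (v : EuclideanSpace ℝ (Fin n) → ℝ) :
    lpP n p (fun x => c * v x) = |c| ^ p * lpP n p v := by
  unfold lpP
  simp_rw [abs_mul, mul_pow]
  rw [integral_const_mul]

lemma gradSq_const_mul (n : ℕ) (c : ℝ) (v : EuclideanSpace ℝ (Fin n) → ℝ)
    (hv : Differentiable ℝ v) :
    gradSq n (fun x => c * v x) = c ^ 2 * gradSq n v := by
  unfold gradSq
  have h : ∀ x, ‖fderiv ℝ (fun y => c * v y) x‖ ^ 2 = c ^ 2 * ‖fderiv ℝ v x‖ ^ 2 := by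
    intro x
    rw [fderiv_const_mul (hv x) c, norm_smul]
    simp [mul_pow, Real.norm_eq_abs, sq_abs]
  simp_rw [h]
  rw [integral_const_mul]

lemma Adm_const_mul (n : ℕ) (c : ℝ) (v : EuclideanSpace ℝ (Fin n) → ℝ) (hv : Adm n v) :
    Adm n (fun x => c * v x) := by
  obtain ⟨h1, h2, h3, h4, h5⟩ := hv
  refine ⟨fun x => (h1 x).const_mul c, ?_, h3.const_mul c, h4.const_mul c, h5.const_mul c⟩
  have : (fun x => ‖fderiv ℝ (fun y => c * v y) x‖) = fun x => |c| * ‖fderiv ℝ v x‖ := by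
    funext x
    rw [fderiv_const_mul (h1 x) c, norm_smul, Real.norm_eq_abs]
  rw [this]
  exact h2.const_mul _

lemma lpP3_pos (n : ℕ) (v : EuclideanSpace ℝ (Fin n) → ℝ) (hv : Adm n v) (hv0 : v ≠ 0) :
    0 < lpP n 3 v := by
  obtain ⟨x₀, hx₀⟩ : ∃ x, v x ≠ 0 := by
    by_contra h; push_neg at h; exact hv0 (funext h)
  have hcont : Continuous v := hv.1.continuous
  have hint : Integrable (fun x => |v x| ^ (3 : ℕ)) volume := by
    have := hv.2.2.1.integrable_norm_rpow (by norm_num) (by norm_num)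
    simpa [← Real.rpow_natCast, ENNReal.toReal_ofNat, -Real.rpow_natCast] using this
  rw [lpP, integral_pos_iff_support_of_nonneg (fun x => pow_nonneg (abs_nonneg _) _) hint]
  have hsupp : Function.support (fun x => |v x| ^ (3 : ℕ)) = {x | v x ≠ 0} := by
    ext x
    simp [Function.support, abs_eq_zero, pow_eq_zero_iff]
  rw [hsupp]
  have hopen : IsOpen {x : EuclideanSpace ℝ (Fin n) | v x ≠ 0} :=
    isOpen_compl_singleton.preimage hcont
  exact hopen.measure_pos volume ⟨x₀, hx₀⟩

lemma key (n : ℕ) (a₂ : ℝ) (v : EuclideanSpace ℝ (Fin n) → ℝ)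
    (hv : Adm n v) (hv0 : v ≠ 0) (hK : Kf n a₂ v < 0) :
    ∃ w, Adm n w ∧ w ≠ 0 ∧ Kf n a₂ w = 0 ∧ Jf n w < Jf n v := by
  obtain ⟨x₀, hx₀⟩ : ∃ x, v x ≠ 0 := by
    by_contra h; push_neg at h; exact hv0 (funext h)
  set A := gradSq n v with hAdef
  set B := lpP n 3 v with hBdef
  set C := lpP n 4 v with hCdef
  set D := lpP n 5 v with hDdef
  have hA : 0 ≤ A := gradSq_nonneg n v
  have hB : 0 < B := lpP3_pos n v hv hv0
  have hC : 0 ≤ C := lpP_nonneg n 4 v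
  have hD : 0 ≤ D := lpP_nonneg n 5 v
  set g : ℝ → ℝ := fun c => c ^ 2 * A + c ^ 3 * B - a₂ * (c ^ 4 * C) - c ^ 5 * D with hg
  have hgc : Continuous g := by fun_prop
  set M : ℝ := |a₂| * C + D + 1 with hM
  have hMpos : 0 < M := by positivity
  set δ : ℝ := min (1/2) (B / (2 * M)) with hδ
  have hδpos : 0 < δ := lt_min (by norm_num) (by positivity)
  have hδle : δ ≤ 1 := le_trans (min_le_left _ _) (by norm_num)
  have hδM : δ * M ≤ B / 2 := by
    have h1 : δ ≤ B / (2 * M) := min_le_right _ _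
    rw [le_div_iff₀ (by positivity : (0:ℝ) < 2 * M)] at h1
    nlinarith
  have hgδ : 0 < g δ := by
    have h1 : a₂ * (δ * C) ≤ |a₂| * (δ * C) :=
      mul_le_mul_of_nonneg_right (le_abs_self a₂) (by positivity)
    have hdd : δ * (δ * D) ≤ 1 * (δ * D) :=
      mul_le_mul_of_nonneg_right hδle (mul_nonneg hδpos.le hD)
    have h2 : B - a₂ * δ * C - δ ^ 2 * D ≥ B / 2 := by nlinarith [hδM, hδpos]
    have : g δ = δ ^ 2 * A + δ ^ 3 * (B - a₂ * δ * C - δ ^ 2 * D) := by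
      simp only [hg]; ring
    rw [this]
    nlinarith [pow_pos hδpos 3, pow_nonneg hδpos.le 2]
  have hg1 : g 1 < 0 := by
    simpa [hg, Kf, ← hAdef, ← hBdef, ← hCdef, ← hDdef] using hK
  obtain ⟨l, hlmem, hgl⟩ : ∃ l ∈ Set.Icc δ 1, g l = 0 := by
    have := intermediate_value_Icc' hδle hgc.continuousOn
    have h0 : (0 : ℝ) ∈ Set.Icc (g 1) (g δ) := ⟨hg1.le, hgδ.le⟩
    obtain ⟨l, hl, hgl⟩ := this h0
    exact ⟨l, hl, hgl⟩
  have hlpos : 0 < l := lt_of_lt_of_le hδpos hlmem.1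
  have hlt1 : l < 1 := by
    rcases lt_or_eq_of_le hlmem.2 with h | h
    · exact h
    · exfalso; rw [h] at hgl; linarith
  refine ⟨fun x => l * v x, Adm_const_mul n l v hv, ?_, ?_, ?_⟩
  · intro h
    have h0 : l * v x₀ = 0 := by simpa using congrFun h x₀
    rcases mul_eq_zero.mp h0 with h' | h'
    · exact absurd h' hlpos.ne'
    · exact hx₀ h'
  · have habs : |l| = l := abs_of_pos hlpos
    rw [Kf, gradSq_const_mul n l v hv.1, lpP_const_mul, lpP_const_mul, lpP_const_mul, habs]
    rw [← hAdef, ← hBdef, ← hCdef, ← hDdef]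
    calc l ^ 2 * A + l ^ 3 * B - a₂ * (l ^ 4 * C) - l ^ 5 * D = g l := by simp [hg]
    _ = 0 := hgl
  · have habs : |l| = l := abs_of_pos hlpos
    rw [Jf, Jf, gradSq_const_mul n l v hv.1, lpP_const_mul, lpP_const_mul, habs]
    rw [← hAdef, ← hBdef, ← hDdef]
    have h2 : l ^ 2 ≤ 1 := pow_le_one₀ hlpos.le hlt1.le
    have h3 : l ^ 3 < 1 := pow_lt_one₀ hlpos.le hlt1 (by norm_num)
    have h5 : l ^ 5 ≤ 1 := pow_le_one₀ hlpos.le hlt1.le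
    nlinarith

theorem stmt9 (n : ℕ) (hn : n ∈ ({1, 2, 3} : Set ℕ)) (a₂ : ℝ)
    (μ : ℝ)
    (hμ : μ = sInf {r : ℝ | ∃ w : EuclideanSpace ℝ (Fin n) → ℝ,
      Adm n w ∧ w ≠ 0 ∧ Kf n a₂ w = 0 ∧ r = Jf n w})
    (v : EuclideanSpace ℝ (Fin n) → ℝ) (hv : Adm n v) (hv0 : v ≠ 0)
    (hK : Kf n a₂ v < 0) :
    μ < Jf n v ∧
      μ = sInf {r : ℝ | ∃ w : EuclideanSpace ℝ (Fin n) → ℝ,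
        Adm n w ∧ w ≠ 0 ∧ Kf n a₂ w ≤ 0 ∧ r = Jf n w} := by
  set S₁ := {r : ℝ | ∃ w : EuclideanSpace ℝ (Fin n) → ℝ,
      Adm n w ∧ w ≠ 0 ∧ Kf n a₂ w = 0 ∧ r = Jf n w} with hS₁
  set S₂ := {r : ℝ | ∃ w : EuclideanSpace ℝ (Fin n) → ℝ,
      Adm n w ∧ w ≠ 0 ∧ Kf n a₂ w ≤ 0 ∧ r = Jf n w} with hS₂
  have hsub : S₁ ⊆ S₂ := fun r ⟨w, hw, hw0, hKw, hr⟩ => ⟨w, hw, hw0, hKw.le, hr⟩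
  have hbdd2 : BddBelow S₂ := ⟨0, fun r ⟨w, _, _, _, hr⟩ => hr ▸ Jf_nonneg n w⟩
  have hbdd1 : BddBelow S₁ := hbdd2.mono hsub
  obtain ⟨w, hw, hw0, hKw, hJw⟩ := key n a₂ v hv hv0 hK
  have hne1 : S₁.Nonempty := ⟨Jf n w, w, hw, hw0, hKw, rfl⟩
  have hlt : μ < Jf n v := by
    calc μ ≤ Jf n w := hμ ▸ csInf_le hbdd1 ⟨w, hw, hw0, hKw, rfl⟩
    _ < Jf n v := hJw
  refine ⟨hlt, le_antisymm ?_ ?_⟩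
  · refine le_csInf ⟨Jf n v, v, hv, hv0, hK.le, rfl⟩ ?_
    rintro r ⟨u, hu, hu0, hKu, rfl⟩
    rcases lt_or_eq_of_le hKu with h | h
    · obtain ⟨u', hu', hu'0, hKu', hJu'⟩ := key n a₂ u hu hu0 h
      have : μ ≤ Jf n u' := hμ ▸ csInf_le hbdd1 ⟨u', hu', hu'0, hKu', rfl⟩
      linarith
    · exact hμ ▸ csInf_le hbdd1 ⟨u, hu, hu0, h, rfl⟩
  · exact hμ ▸ csInf_le_csInf hbdd2 hne1 hsub
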